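/- Non-degeneracy of a differential Nash equilibrium does not follow from positive definiteness of the partial Hessians: there exist C² functions f₁, f₂ : ℝ × ℝ → ℝ and a point u with ∂f₁/∂u₁(u) = ∂f₂/∂u₂(u) = 0, ∂²f₁/∂u₁²(u) > 0, ∂²f₂/∂u₂²(u) > 0, but with singular Jacobian dω(u) of ω = (∂f₁/∂u₁, ∂f₂/∂u₂). (Witness: f₁ = u₁²/2 − u₁u₂, f₂ = u₂²/2 − u₁u₂ at u = (0,0).) -/

import Mathlib

theorem stmt_17 :
    ∃ (f₁ f₂ : ℝ → ℝ → ℝ) (p q : ℝ),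
      ContDiff ℝ 2 (fun z : ℝ × ℝ => f₁ z.1 z.2) ∧
      ContDiff ℝ 2 (fun z : ℝ × ℝ => f₂ z.1 z.2) ∧
      deriv (fun u₁ => f₁ u₁ q) p = 0 ∧
      deriv (fun u₂ => f₂ p u₂) q = 0 ∧
      0 < deriv (fun u₁ => deriv (fun u₁' => f₁ u₁' q) u₁) p ∧
      0 < deriv (fun u₂ => deriv (fun u₂' => f₂ p u₂') u₂) q ∧
      ¬ IsUnit (Matrix.det
        !![deriv (fun u₁ => deriv (fun u₁' => f₁ u₁' q) u₁) p,
           deriv (fun u₂ => deriv (fun u₁' => f₁ u₁' u₂) p) q;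
           deriv (fun u₁ => deriv (fun u₂' => f₂ u₁ u₂') q) p,
           deriv (fun u₂ => deriv (fun u₂' => f₂ p u₂') u₂) q]) := by
  refine ⟨fun a b => a ^ 2 / 2 - a * b, fun a b => b ^ 2 / 2 - a * b, 0, 0, ?_, ?_, ?_, ?_, ?_, ?_, ?_⟩
  · exact ContDiff.sub (ContDiff.div_const (contDiff_fst.pow 2) 2)
      (contDiff_fst.mul contDiff_snd)
  · exact ContDiff.sub (ContDiff.div_const (contDiff_snd.pow 2) 2)
      (contDiff_fst.mul contDiff_snd)
  · simp [deriv_sub, deriv_div_const, mul_comm]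
  · simp [deriv_sub, deriv_div_const, mul_comm]
  · have : (fun u₁ : ℝ => deriv (fun u₁' : ℝ => u₁' ^ 2 / 2 - u₁' * 0) u₁) = fun u₁ => u₁ := by
      funext u
      simp
    rw [this]; simp
  · have : (fun u₂ : ℝ => deriv (fun u₂' : ℝ => u₂' ^ 2 / 2 - 0 * u₂') u₂) = fun u₂ => u₂ := by
      funext u
      simp
    rw [this]; simp
  · have h1 : (fun u₁ : ℝ => deriv (fun u₁' : ℝ => u₁' ^ 2 / 2 - u₁' * 0) u₁) = fun u₁ => u₁ := by
      funext u; simp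
    have h2 : (fun u₂ : ℝ => deriv (fun u₁' : ℝ => u₁' ^ 2 / 2 - u₁' * u₂) (0:ℝ)) = fun u₂ => -u₂ := by
      funext u
      rw [deriv_fun_sub (by fun_prop) (by fun_prop)]
      simp
    have h3 : (fun u₁ : ℝ => deriv (fun u₂' : ℝ => u₂' ^ 2 / 2 - u₁ * u₂') (0:ℝ)) = fun u₁ => -u₁ := by
      funext u
      rw [deriv_fun_sub (by fun_prop) (by fun_prop)]
      have : deriv (fun x : ℝ => u * x) 0 = u := by
        simpa using ((hasDerivAt_id (0:ℝ)).const_mul u).deriv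
      simp only [this]
      simp
    have h4 : (fun u₂ : ℝ => deriv (fun u₂' : ℝ => u₂' ^ 2 / 2 - 0 * u₂') u₂) = fun u₂ => u₂ := by
      funext u; simp
    rw [h1, h2, h3, h4]
    simp [Matrix.det_fin_two]
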